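/- Let H be a Hilbert space and M, N closed subspaces with orthogonal projections P_M, P_N. Suppose that for every q ∈ N, ‖q − P_M q‖ ≤ ‖(id − π) P_M q‖ for some bounded linear operator π : H → H satisfying ‖id − π‖ ≤ C. Then for every unit vector q ∈ N, one has ‖q − P_M q‖ ≤ (1 − 1/(C+1)²)^{1/2}, i.e., the one-sided gap δ(N, M) = sup_{q∈N, ‖q‖=1} ‖q − P_M q‖ is at most (1 − 1/(C+1)²)^{1/2}. -/

import Mathlib

open RealInnerProductSpace


/-- Gap estimate: if for every `q ∈ N` one has
`‖q - P_M q‖ ≤ ‖(id - π) (P_M q)‖` with `‖id - π‖ ≤ C`, then the one-sided gap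
`δ(N,M)` is at most `√(1 - 1/(C+1)²)`. -/
theorem gap_bound {H : Type*} [NormedAddCommGroup H] [InnerProductSpace ℝ H]
    (M N : Submodule ℝ H) [CompleteSpace ↥M]
    (π : H →L[ℝ] H) (C : ℝ) (hC : 0 ≤ C)
    (hπ : ‖ContinuousLinearMap.id ℝ H - π‖ ≤ C)
    (hyp : ∀ q ∈ N, ‖q - (M.orthogonalProjectionOnto q : H)‖ ≤
      ‖(ContinuousLinearMap.id ℝ H - π) ((M.orthogonalProjectionOnto q : H))‖) :
    ∀ q ∈ N, ‖q‖ = 1 →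
      ‖q - (M.orthogonalProjectionOnto q : H)‖ ≤ Real.sqrt (1 - 1 / (C + 1) ^ 2) := by
  intro q hq hq1
  set p : H := (M.orthogonalProjectionOnto q : H) with hp
  have horth : @inner ℝ _ _ (q - p) p = 0 := by
    have h1 : q - p ∈ Mᗮ := M.sub_starProjection_mem_orthogonal q
    rw [real_inner_comm]
    exact h1 p (M.orthogonalProjectionOnto q).2
  have hpyth : ‖q‖ ^ 2 = ‖q - p‖ ^ 2 + ‖p‖ ^ 2 := by
    have := norm_add_sq_real (q - p) p
    simp [horth] at this
    simpa using this
  have hbound : ‖q - p‖ ≤ C * ‖p‖ := by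
    calc ‖q - p‖ ≤ ‖(ContinuousLinearMap.id ℝ H - π) p‖ := hyp q hq
    _ ≤ ‖ContinuousLinearMap.id ℝ H - π‖ * ‖p‖ := (ContinuousLinearMap.id ℝ H - π).le_opNorm p
    _ ≤ C * ‖p‖ := by gcongr
  have hCp : (0:ℝ) < C + 1 := by linarith
  have hlow : 1 / (C + 1) ≤ ‖p‖ := by
    have h1 : (1:ℝ) ≤ (C + 1) * ‖p‖ := by
      have htri : ‖q‖ ≤ ‖q - p‖ + ‖p‖ := by
        simpa using norm_add_le (q - p) p
      nlinarith
    rw [div_le_iff₀ hCp] at *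
    linarith [mul_comm (C+1) ‖p‖]
  have hsq : ‖q - p‖ ^ 2 ≤ 1 - 1 / (C + 1) ^ 2 := by
    have : (1 / (C + 1)) ^ 2 ≤ ‖p‖ ^ 2 :=
      pow_le_pow_left₀ (by positivity) hlow 2
    have h2 : (1 / (C + 1)) ^ 2 = 1 / (C + 1) ^ 2 := by
      rw [div_pow, one_pow]
    nlinarith [hpyth, hq1]
  calc ‖q - p‖ = Real.sqrt (‖q - p‖ ^ 2) := by
        rw [Real.sqrt_sq (norm_nonneg _)]
  _ ≤ Real.sqrt (1 - 1 / (C + 1) ^ 2) := Real.sqrt_le_sqrt hsq
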